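/- Let A > 0, B > 0, and define c(d) = B·log₂(1 + A/d²) for d > 0, with inverse c⁻¹(r) = (A/(2^{r/B} − 1))^{1/2} for r > 0. If r_CC > 0 and r_UE ≥ 4·r_CC, then c⁻¹(2·r_CC + r_UE) + c⁻¹(r_CC + r_UE) < c⁻¹(r_CC). -/
import Mathlib


/-- Inverse of the LOS capacity `c(d) = B·log₂(1 + A/d²)`. -/
noncomputable def cInv (A B r : ℝ) : ℝ := Real.sqrt (A / (2 ^ (r / B) - 1))

lemma sqrt4 : Real.sqrt 4 = 2 := by
  rw [show (4:ℝ) = 2^2 by norm_num, Real.sqrt_sq (by norm_num)]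

lemma half_eq (a d1 : ℝ) (ha : 0 < a) (hd1 : 0 < d1) :
    Real.sqrt (a/d1) / 2 = Real.sqrt (a/(4*d1)) := by
  have e : Real.sqrt ((a/d1)/4) = Real.sqrt (a/d1) / Real.sqrt 4 :=
    Real.sqrt_div (by positivity) 4
  rw [show a/(4*d1) = (a/d1)/4 by ring, e, sqrt4]

lemma half_bound_le (a d1 d : ℝ) (ha : 0 < a) (hd1 : 0 < d1) (hd : 4*d1 ≤ d) :
    Real.sqrt (a/d) ≤ Real.sqrt (a/d1) / 2 := by
  rw [half_eq a d1 ha hd1]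
  apply Real.sqrt_le_sqrt
  exact div_le_div_of_nonneg_left ha.le (by linarith) hd

lemma half_bound_lt (a d1 d : ℝ) (ha : 0 < a) (hd1 : 0 < d1) (hd : 4*d1 < d) :
    Real.sqrt (a/d) < Real.sqrt (a/d1) / 2 := by
  rw [half_eq a d1 ha hd1]
  apply Real.sqrt_lt_sqrt (div_nonneg ha.le (by linarith))
  exact div_lt_div_of_pos_left ha (by linarith) hd

/-- If `r_CC > 0` and `r_UE ≥ 4 r_CC`, then
`c⁻¹(2 r_CC + r_UE) + c⁻¹(r_CC + r_UE) < c⁻¹(r_CC)`. -/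
theorem stmt_0 (A B rCC rUE : ℝ) (hA : 0 < A) (hB : 0 < B)
    (hCC : 0 < rCC) (hUE : 4 * rCC ≤ rUE) :
    cInv A B (2 * rCC + rUE) + cInv A B (rCC + rUE) < cInv A B rCC := by
  have hx0 : 0 < rCC / B := div_pos hCC hB
  set x := rCC / B with hx
  set t : ℝ := (2:ℝ) ^ x with ht
  have ht1 : 1 < t := Real.one_lt_rpow_iff_of_pos (by norm_num) |>.2 (by norm_num; exact hx0)
  have hpow5 : (2:ℝ) ^ (5*x) = t^5 := by
    rw [show (5:ℝ)*x = x*((5:ℕ):ℝ) by push_cast; ring,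
      Real.rpow_mul (by norm_num), Real.rpow_natCast]
  have hpow6 : (2:ℝ) ^ (6*x) = t^6 := by
    rw [show (6:ℝ)*x = x*((6:ℕ):ℝ) by push_cast; ring,
      Real.rpow_mul (by norm_num), Real.rpow_natCast]
  have h1 : 5 * x ≤ (rCC + rUE) / B := by
    rw [hx, mul_div_assoc']
    exact (div_le_div_iff_of_pos_right hB).2 (by linarith)
  have h2 : 6 * x ≤ (2 * rCC + rUE) / B := by
    rw [hx, mul_div_assoc']
    exact (div_le_div_iff_of_pos_right hB).2 (by linarith)
  have hmono : ∀ u v : ℝ, u ≤ v → (2:ℝ) ^ u ≤ (2:ℝ) ^ v := fun u v h =>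
    Real.rpow_le_rpow_left_iff (by norm_num : (1:ℝ) < 2) |>.2 h
  have hb1 : t^5 ≤ (2:ℝ) ^ ((rCC + rUE) / B) := hpow5 ▸ hmono _ _ h1
  have hb2 : t^6 ≤ (2:ℝ) ^ ((2 * rCC + rUE) / B) := hpow6 ▸ hmono _ _ h2
  have key1 : 4 * (t - 1) ≤ t^5 - 1 := by
    nlinarith [sq_nonneg (t-1), sq_nonneg (t^2-1), sq_nonneg (t^2+t-2)]
  have key2 : 4 * (t - 1) < t^6 - 1 := by
    nlinarith [sq_nonneg (t-1), sq_nonneg (t^2-1), sq_nonneg (t^3-1)]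
  have hd1 : 0 < t - 1 := by linarith
  have hle : cInv A B (rCC + rUE) ≤ cInv A B rCC / 2 :=
    half_bound_le A (t-1) ((2:ℝ) ^ ((rCC + rUE) / B) - 1) hA hd1 (by linarith)
  have hlt : cInv A B (2 * rCC + rUE) < cInv A B rCC / 2 :=
    half_bound_lt A (t-1) ((2:ℝ) ^ ((2 * rCC + rUE) / B) - 1) hA hd1 (by nlinarith)
  linarith
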